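/- arXiv:1906.03768 — 6 statements merged into one kernel-verified Lean document; each statement's English description precedes it below -/
import Mathlib

section
/- In the setting of the exact variance identity for θ̂^{L1} (pairs (y_d, x_d), d ≤ n1, and (Z_e, x'_e), e ≤ n2, mutually independent; y_d ∈ {0,1} with E[y_d x_d] = p m θ and E[y_d x_d²] = p m θ(1 − θ + mθ); Z_e ∈ {0, K} with E[Z_e x'_e] = q K m l and E[Z_e² x'_e²] = q K² L; θ̂^{L1} := (Σ_d y_d x_d + Σ_e Z_e x'_e)/((p n1 + q K n2) m)), assume additionally that 0 ≤ L ≤ m², 0 ≤ θ ≤ 1, 0 ≤ l ≤ 1, p > 0 and q·K > 0. Then Var(θ̂^{L1}) ≤ 2·max(1, K) / (min(p, q·K) · (n1 + n2)). -/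
open MeasureTheory ProbabilityTheory Finset

/-- Order bound on the variance of the L1 estimator (Theorem 2, part 2): under
the moment and independence hypotheses of the exact variance identity, and
assuming additionally `0 ≤ L ≤ m²`, `0 ≤ θ ≤ 1`, `0 ≤ l ≤ 1`, `p > 0` and
`q K > 0`, the variance of
`θ̂ = (∑ d, Y d X d + ∑ e, Z e X' e) / ((p n1 + q K n2) m)` is at most
`2 max(1, K) / (min(p, q K) (n1 + n2))`, i.e. of order `O(1 / (|S₁| + |S₂|))`. -/
theorem L1_estimator_variance_order {Ω : Type*} [MeasurableSpace Ω]
    (μ : Measure Ω) [IsProbabilityMeasure μ]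
    (m : ℕ) (hm : 1 ≤ m) (θ l p q K L : ℝ)
    (hθ : θ ∈ Set.Icc (0 : ℝ) 1) (hl : l ∈ Set.Icc (0 : ℝ) 1)
    (hp : p ∈ Set.Ioc (0 : ℝ) 1) (hq : q ∈ Set.Ioc (0 : ℝ) 1)
    (hK : 0 < K) (hL : 0 ≤ L) (hLm : L ≤ (m : ℝ) ^ 2)
    (hqK : 0 < q * K)
    (n1 n2 : ℕ) (hn1 : 1 ≤ n1) (hn2 : 1 ≤ n2)
    (Y X : Fin n1 → Ω → ℝ) (Z X' : Fin n2 → Ω → ℝ)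
    (hindep : iIndepFun
      (Sum.elim (fun d ω => (Y d ω, X d ω)) (fun e ω => (Z e ω, X' e ω))) μ)
    (hY01 : ∀ d ω, Y d ω = 0 ∨ Y d ω = 1)
    (hZ0K : ∀ e ω, Z e ω = 0 ∨ Z e ω = K)
    (hYXmem : ∀ d, MemLp (fun ω => Y d ω * X d ω) 2 μ)
    (hYX : ∀ d, ∫ ω, Y d ω * X d ω ∂μ = p * m * θ)
    (hYX2 : ∀ d, ∫ ω, Y d ω * (X d ω) ^ 2 ∂μ = p * m * θ * (1 - θ + m * θ))
    (hZXmem : ∀ e, MemLp (fun ω => Z e ω * X' e ω) 2 μ)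
    (hZX : ∀ e, ∫ ω, Z e ω * X' e ω ∂μ = q * K * m * l)
    (hZX2 : ∀ e, ∫ ω, (Z e ω) ^ 2 * (X' e ω) ^ 2 ∂μ = q * K ^ 2 * L) :
    variance (fun ω => (∑ d, Y d ω * X d ω + ∑ e, Z e ω * X' e ω)
        / ((p * n1 + q * K * n2) * m)) μ
      ≤ 2 * max 1 K / (min p (q * K) * ((n1 : ℝ) + n2)) := by
  obtain ⟨hθ0, hθ1⟩ := hθ
  obtain ⟨hp0, hp1⟩ := hp
  obtain ⟨hq0, hq1⟩ := hq
  have hm0 : (0 : ℝ) < m := by exact_mod_cast Nat.lt_of_lt_of_le Nat.zero_lt_one hm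
  have hm1 : (1 : ℝ) ≤ m := by exact_mod_cast hm
  have hn1' : (1 : ℝ) ≤ n1 := by exact_mod_cast hn1
  have hn2' : (1 : ℝ) ≤ n2 := by exact_mod_cast hn2
  set W : Fin n1 ⊕ Fin n2 → Ω → ℝ :=
    Sum.elim (fun d ω => Y d ω * X d ω) (fun e ω => Z e ω * X' e ω) with hWdef
  -- independence of the products
  have hWindep : iIndepFun W μ := by
    have hcomp := hindep.comp (fun _ (x : ℝ × ℝ) => x.1 * x.2)
      (fun _ => measurable_fst.mul measurable_snd)
    have : W = fun i =>
        (fun x : ℝ × ℝ => x.1 * x.2) ∘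
          (Sum.elim (fun d ω => (Y d ω, X d ω)) (fun e ω => (Z e ω, X' e ω)) i) := by
      funext i ω; cases i <;> rfl
    rw [this]; exact hcomp
  have hWmem : ∀ i, MemLp (W i) 2 μ := by
    rintro (d | e)
    · exact hYXmem d
    · exact hZXmem e
  -- variance bound for each term over Fin n1
  have hvar1 : ∀ d, variance (W (Sum.inl d)) μ ≤ p * m ^ 2 := by
    intro d
    have hle := variance_le_expectation_sq (X := W (Sum.inl d))
      (hYXmem d).aestronglyMeasurable (μ := μ)
    have heq : μ[(W (Sum.inl d)) ^ 2] = p * m * θ * (1 - θ + m * θ) := by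
      rw [← hYX2 d]
      apply integral_congr_ae
      filter_upwards with ω
      simp only [hWdef, Sum.elim_inl, Pi.pow_apply]
      rcases hY01 d ω with h | h <;> rw [h] <;> ring
    rw [heq] at hle
    refine hle.trans ?_
    have haux : θ * (1 - θ + m * θ) ≤ m := by
      nlinarith [mul_nonneg (sub_nonneg.2 hθ1) hθ0,
        mul_nonneg (sub_nonneg.2 hθ1) (sub_nonneg.2 hθ1), sq_nonneg θ]
    have hpm : (0 : ℝ) ≤ p * m := by positivity
    calc p * m * θ * (1 - θ + m * θ) = p * m * (θ * (1 - θ + m * θ)) := by ring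
      _ ≤ p * m * m := mul_le_mul_of_nonneg_left haux hpm
      _ = p * m ^ 2 := by ring
  have hvar2 : ∀ e, variance (W (Sum.inr e)) μ ≤ q * K ^ 2 * m ^ 2 := by
    intro e
    have hle := variance_le_expectation_sq (X := W (Sum.inr e))
      (hZXmem e).aestronglyMeasurable (μ := μ)
    have heq : μ[(W (Sum.inr e)) ^ 2] = q * K ^ 2 * L := by
      rw [← hZX2 e]
      apply integral_congr_ae
      filter_upwards with ω
      simp only [hWdef, Sum.elim_inr, Pi.pow_apply]
      ring
    rw [heq] at hle
    refine hle.trans ?_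
    have : q * K ^ 2 * L ≤ q * K ^ 2 * m ^ 2 := by
      apply mul_le_mul_of_nonneg_left hLm (by positivity)
    linarith
  -- variance of the sum
  have hsum : variance (∑ i, W i) μ = ∑ i, variance (W i) μ :=
    IndepFun.variance_sum (fun i _ => hWmem i)
      (fun i _ j _ hij => hWindep.indepFun hij)
  -- rewrite the estimator
  set A : ℝ := p * n1 + q * K * n2 with hAdef
  have hA : 0 < A := by
    have : 0 < p * n1 := by positivity
    have : 0 < q * K * n2 := by positivity
    rw [hAdef]; linarith
  have hfun : (fun ω => (∑ d, Y d ω * X d ω + ∑ e, Z e ω * X' e ω)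
      / ((p * n1 + q * K * n2) * m))
      = fun ω => (A * m)⁻¹ * (∑ i, W i) ω := by
    funext ω
    rw [Finset.sum_apply, Fintype.sum_sum_type]
    simp only [hWdef, Sum.elim_inl, Sum.elim_inr, hAdef]
    rw [div_eq_inv_mul]
  rw [hfun, variance_const_mul, hsum]
  -- bound the sum of variances
  have hsumle : ∑ i, variance (W i) μ ≤ n1 * (p * m ^ 2) + n2 * (q * K ^ 2 * m ^ 2) := by
    rw [Fintype.sum_sum_type]
    have h1 : ∑ d : Fin n1, variance (W (Sum.inl d)) μ ≤ n1 * (p * m ^ 2) := by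
      calc ∑ d : Fin n1, variance (W (Sum.inl d)) μ ≤ ∑ _d : Fin n1, p * m ^ 2 :=
            Finset.sum_le_sum fun d _ => hvar1 d
        _ = n1 * (p * m ^ 2) := by simp [mul_comm]
    have h2 : ∑ e : Fin n2, variance (W (Sum.inr e)) μ ≤ n2 * (q * K ^ 2 * m ^ 2) := by
      calc ∑ e : Fin n2, variance (W (Sum.inr e)) μ ≤ ∑ _e : Fin n2, q * K ^ 2 * m ^ 2 :=
            Finset.sum_le_sum fun e _ => hvar2 e
        _ = n2 * (q * K ^ 2 * m ^ 2) := by simp [mul_comm]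
    linarith
  have step1 : (A * m)⁻¹ ^ 2 * ∑ i, variance (W i) μ
      ≤ (A * m)⁻¹ ^ 2 * (n1 * (p * m ^ 2) + n2 * (q * K ^ 2 * m ^ 2)) := by
    apply mul_le_mul_of_nonneg_left hsumle (by positivity)
  refine step1.trans ?_
  have key : (A * m)⁻¹ ^ 2 * (n1 * (p * m ^ 2) + n2 * (q * K ^ 2 * m ^ 2))
      = (n1 * p + n2 * (q * K) * K) / A ^ 2 := by
    field_simp
  rw [key]
  set M : ℝ := max 1 K with hMdef
  have hM1 : (1 : ℝ) ≤ M := le_max_left _ _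
  have hMK : K ≤ M := le_max_right _ _
  set s : ℝ := min p (q * K) with hsdef
  have hs0 : 0 < s := lt_min hp0 hqK
  have hsp : s ≤ p := min_le_left _ _
  have hsq : s ≤ q * K := min_le_right _ _
  have hnum : n1 * p + n2 * (q * K) * K ≤ M * A := by
    have h1 : (n1 : ℝ) * p * 1 ≤ n1 * p * M :=
      mul_le_mul_of_nonneg_left hM1 (by positivity)
    have h2 : (n2 : ℝ) * (q * K) * K ≤ n2 * (q * K) * M :=
      mul_le_mul_of_nonneg_left hMK (by positivity)
    have : M * A = n1 * p * M + n2 * (q * K) * M := by rw [hAdef]; ring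
    linarith
  have hden : s * ((n1 : ℝ) + n2) ≤ A := by
    have h1 : s * n1 ≤ p * n1 := mul_le_mul_of_nonneg_right hsp (by positivity)
    have h2 : s * n2 ≤ q * K * n2 := mul_le_mul_of_nonneg_right hsq (by positivity)
    rw [hAdef]; nlinarith
  have step2 : (n1 * p + n2 * (q * K) * K) / A ^ 2 ≤ M / A := by
    rw [div_le_div_iff₀ (by positivity) hA]
    calc (n1 * p + n2 * (q * K) * K) * A ≤ (M * A) * A :=
          mul_le_mul_of_nonneg_right hnum hA.le
      _ = M * A ^ 2 := by ring
  refine step2.trans ?_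
  have step3 : M / A ≤ M / (s * ((n1 : ℝ) + n2)) :=
    div_le_div_of_nonneg_left (by linarith) (by positivity) hden
  refine step3.trans ?_
  have hpos : 0 < s * ((n1 : ℝ) + n2) := by positivity
  have hMnn : 0 ≤ M / (s * ((n1 : ℝ) + n2)) := div_nonneg (by linarith) hpos.le
  have h2M : 2 * M / (s * ((n1 : ℝ) + n2))
      = M / (s * ((n1 : ℝ) + n2)) + M / (s * ((n1 : ℝ) + n2)) := by ring
  linarith
end

section
/- Fix k ≥ 2 classes with parameters θ_1, …, θ_k in the probability simplex of ℝ^v, m ≥ 1, t > 1, a word index j and a class index i. Let there be n ≥ 1 independent real random variables x_1, …, x_n (the counts of word j in n documents) together with fixed label functions y_i, z_i : {1, …, n} → {0, 1}: each document d is either positively labelled into exactly one class l (and then E[x_d] = m·θ_{l j}) or negatively labelled as not in exactly one class l (and then E[x_d] = m·M_l/(k − 1), where M_l := Σ_{b=1}^k θ_{b j} − θ_{l j}). Let C_l and D_l be the numbers of documents positively labelled into class l and negatively labelled as not in class l, respectively, with Σ_l (C_l + D_l) = n; set p_l = C_l/n, q_l = D_l/n. Define θ̂^{L2} := Σ_{d=1}^n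 (y_i(d) + t − z_i(d))·x_d / (m·n·(p_i − q_i + t)). Then E[θ̂^{L2}] = (t·Σ_{l=1}^k p_l θ_{l j} + p_i θ_{i j} + t·Σ_{l=1}^k q_l M_l/(k − 1) − q_i M_i/(k − 1)) / (p_i − q_i + t). -/
open MeasureTheory ProbabilityTheory Finset

/-- Number of documents positively labelled into class `l`. -/
def posCount {n k : ℕ} (pos : Fin n → Bool) (lab : Fin n → Fin k) (l : Fin k) : ℕ :=
  (Finset.univ.filter fun d => pos d = true ∧ lab d = l).card

/-- Number of documents negatively labelled as not in class `l`. -/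
def negCount {n k : ℕ} (pos : Fin n → Bool) (lab : Fin n → Fin k) (l : Fin k) : ℕ :=
  (Finset.univ.filter fun d => pos d = false ∧ lab d = l).card

set_option maxHeartbeats 1000000

/-- Exact expectation of the L2 (likelihood-ratio) estimator (Theorem 3, part 1).
Each document `d` is either positively labelled into exactly one class `lab d`
(when `pos d = true`, with `E[x d] = m θ_{lab d, j}`) or negatively labelled as
not in class `lab d` (when `pos d = false`, with `E[x d] = m M_{lab d} / (k-1)`
where `M_l = ∑ b, θ_{b j} - θ_{l j}`). With `y_i(d), z_i(d)` the indicators of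
being positively/negatively labelled w.r.t. class `i`, `C_l, D_l` the label
counts, `p_l = C_l / n`, `q_l = D_l / n`, the estimator
`θ̂ = ∑ d, (y_i(d) + t - z_i(d)) x d / (m n (p_i - q_i + t))` has expectation
`(t ∑ l, p_l θ_{l j} + p_i θ_{i j} + t ∑ l, q_l M_l/(k-1) - q_i M_i/(k-1))
  / (p_i - q_i + t)`. -/
theorem L2_estimator_expectation {Ω : Type*} [MeasurableSpace Ω]
    (μ : Measure Ω) [IsProbabilityMeasure μ]
    {k v : ℕ} (hk : 2 ≤ k)
    (θ : Fin k → Fin v → ℝ)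
    (hθ0 : ∀ l j', 0 ≤ θ l j') (hθ1 : ∀ l, ∑ j', θ l j' = 1)
    (m : ℕ) (hm : 1 ≤ m) (t : ℝ) (ht : 1 < t) (j : Fin v) (i : Fin k)
    (n : ℕ) (hn : 1 ≤ n) (x : Fin n → Ω → ℝ)
    (pos : Fin n → Bool) (lab : Fin n → Fin k)
    (hindep : iIndepFun x μ)
    (hint : ∀ d, Integrable (x d) μ)
    (hmean_pos : ∀ d, pos d = true → ∫ ω, x d ω ∂μ = (m : ℝ) * θ (lab d) j)
    (hmean_neg : ∀ d, pos d = false →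
      ∫ ω, x d ω ∂μ = (m : ℝ) * ((∑ b, θ b j) - θ (lab d) j) / ((k : ℝ) - 1)) :
    ∫ ω, (∑ d, ((if pos d = true ∧ lab d = i then (1 : ℝ) else 0) + t
            - (if pos d = false ∧ lab d = i then (1 : ℝ) else 0)) * x d ω)
        / ((m : ℝ) * n * ((posCount pos lab i : ℝ) / n
            - (negCount pos lab i : ℝ) / n + t)) ∂μ
      = (t * ∑ l, ((posCount pos lab l : ℝ) / n) * θ l j
          + ((posCount pos lab i : ℝ) / n) * θ i j
          + t * ∑ l, ((negCount pos lab l : ℝ) / n)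
              * ((∑ b, θ b j) - θ l j) / ((k : ℝ) - 1)
          - ((negCount pos lab i : ℝ) / n)
              * ((∑ b, θ b j) - θ i j) / ((k : ℝ) - 1))
        / ((posCount pos lab i : ℝ) / n - (negCount pos lab i : ℝ) / n + t) := by

  classical
  -- coefficients and means
  set P : Fin k → ℝ := fun l => (posCount pos lab l : ℝ) with hP
  set Q : Fin k → ℝ := fun l => (negCount pos lab l : ℝ) with hQ
  have hn0 : (n : ℝ) ≠ 0 := by positivity
  have hm0 : (m : ℝ) ≠ 0 := by positivity
  -- the coefficient of x d
  set c : Fin n → ℝ := fun d =>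
    ((if pos d = true ∧ lab d = i then (1 : ℝ) else 0) + t
      - (if pos d = false ∧ lab d = i then (1 : ℝ) else 0)) with hc
  -- mean as a function of (pos d, lab d)
  set F : Bool × Fin k → ℝ := fun p =>
    ((if p.1 = true ∧ p.2 = i then (1 : ℝ) else 0) + t
      - (if p.1 = false ∧ p.2 = i then (1 : ℝ) else 0)) *
    (if p.1 = true then (m : ℝ) * θ p.2 j
      else (m : ℝ) * ((∑ b, θ b j) - θ p.2 j) / ((k : ℝ) - 1)) with hF
  have hmean : ∀ d, c d * ∫ ω, x d ω ∂μ = F (pos d, lab d) := by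
    intro d
    cases hpd : pos d with
    | true => simp [hF, hc, hpd, hmean_pos d hpd]
    | false => simp [hF, hc, hpd, hmean_neg d hpd]
  -- Step 1: compute the integral
  have hint' : ∀ d ∈ Finset.univ, Integrable (fun ω => c d * x d ω) μ := by
    intro d _; exact (hint d).const_mul _
  have hI : ∫ ω, (∑ d, c d * x d ω)
        / ((m : ℝ) * n * (P i / n - Q i / n + t)) ∂μ
      = (∑ d, F (pos d, lab d)) / ((m : ℝ) * n * (P i / n - Q i / n + t)) := by
    rw [integral_div, integral_finset_sum _ hint']
    congr 1
    refine Finset.sum_congr rfl fun d _ => ?_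
    rw [integral_const_mul, hmean d]
  -- Step 2: fiberwise sum
  have hfiber : ∑ d, F (pos d, lab d)
      = ∑ p : Bool × Fin k,
          ((Finset.univ.filter fun d => (pos d, lab d) = p).card : ℝ) * F p := by
    rw [← Finset.sum_fiberwise' Finset.univ (fun d => (pos d, lab d)) F]
    refine Finset.sum_congr rfl fun p _ => ?_
    rw [Finset.sum_const, nsmul_eq_mul]
  have hcardpos : ∀ l : Fin k,
      ((Finset.univ.filter fun d => (pos d, lab d) = (true, l)).card : ℝ) = P l := by
    intro l
    simp only [hP, posCount]
    congr 2
    ext d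
    simp [Prod.ext_iff]
  have hcardneg : ∀ l : Fin k,
      ((Finset.univ.filter fun d => (pos d, lab d) = (false, l)).card : ℝ) = Q l := by
    intro l
    simp only [hQ, negCount]
    congr 2
    ext d
    simp [Prod.ext_iff]
  have hsum : ∑ d, F (pos d, lab d)
      = (m : ℝ) * (t * ∑ l, P l * θ l j + P i * θ i j
          + t * ∑ l, Q l * ((∑ b, θ b j) - θ l j) / ((k : ℝ) - 1)
          - Q i * ((∑ b, θ b j) - θ i j) / ((k : ℝ) - 1)) := by
    rw [hfiber, Fintype.sum_prod_type]
    rw [Fintype.sum_bool]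
    have htrue : ∀ l : Fin k,
        ((Finset.univ.filter fun d => (pos d, lab d) = (true, l)).card : ℝ) * F (true, l)
          = P l * (((if l = i then (1:ℝ) else 0) + t) * ((m : ℝ) * θ l j)) := by
      intro l; rw [hcardpos l]; simp [hF]
    have hfalse : ∀ l : Fin k,
        ((Finset.univ.filter fun d => (pos d, lab d) = (false, l)).card : ℝ) * F (false, l)
          = Q l * ((t - (if l = i then (1:ℝ) else 0)) *
              ((m : ℝ) * ((∑ b, θ b j) - θ l j) / ((k : ℝ) - 1))) := by
      intro l; rw [hcardneg l]; simp [hF]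
    rw [Finset.sum_congr rfl fun l _ => htrue l, Finset.sum_congr rfl fun l _ => hfalse l]
    have e1 : ∀ l : Fin k, P l * (((if l = i then (1:ℝ) else 0) + t) * ((m : ℝ) * θ l j))
        = (if l = i then P i * ((m : ℝ) * θ i j) else 0)
          + t * (m : ℝ) * (P l * θ l j) := by
      intro l; by_cases h : l = i <;> simp [h] <;> ring
    have e2 : ∀ l : Fin k, Q l * ((t - (if l = i then (1:ℝ) else 0)) *
          ((m : ℝ) * ((∑ b, θ b j) - θ l j) / ((k : ℝ) - 1)))
        = (if l = i then -(Q i * ((m : ℝ) * ((∑ b, θ b j) - θ i j) / ((k : ℝ) - 1))) else 0)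
          + t * (m : ℝ) * (Q l * ((∑ b, θ b j) - θ l j) / ((k : ℝ) - 1)) := by
      intro l; by_cases h : l = i <;> simp [h] <;> ring
    rw [Finset.sum_congr rfl fun l _ => e1 l, Finset.sum_congr rfl fun l _ => e2 l,
      Finset.sum_add_distrib, Finset.sum_add_distrib, ← Finset.mul_sum, ← Finset.mul_sum]
    simp only [Finset.sum_ite_eq', Finset.mem_univ, if_true]
    ring
  -- Step 3: algebra
  have hQle : Q i / n ≤ 1 := by
    rw [div_le_one (by positivity)]
    simp only [hQ]
    have hle : negCount pos lab i ≤ n := by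
      simpa [negCount] using Finset.card_filter_le (Finset.univ : Finset (Fin n))
        (fun d => pos d = false ∧ lab d = i)
    exact_mod_cast hle
  have hE : P i / n - Q i / n + t ≠ 0 := by
    have h1 : (0:ℝ) ≤ P i / n := by positivity
    nlinarith
  have hk1 : (k : ℝ) - 1 ≠ 0 := by
    have : (2:ℝ) ≤ k := by exact_mod_cast hk
    nlinarith
  have hs1 : ∑ l, (P l / n) * θ l j = (∑ l, P l * θ l j) / n := by
    rw [Finset.sum_div]; exact Finset.sum_congr rfl fun l _ => by ring
  have hs2 : ∑ l, (Q l / n) * ((∑ b, θ b j) - θ l j) / ((k : ℝ) - 1)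
      = (∑ l, Q l * ((∑ b, θ b j) - θ l j) / ((k : ℝ) - 1)) / n := by
    rw [Finset.sum_div]; exact Finset.sum_congr rfl fun l _ => by ring
  rw [hI, hsum, hs1, hs2]
  simp only [hP, hQ]
  have hn1 : (1:ℝ) ≤ n := by exact_mod_cast hn
  have hk2 : (0:ℝ) < (k:ℝ) - 1 := by
    have : (2:ℝ) ≤ k := by exact_mod_cast hk
    linarith
  have hEc : ((posCount pos lab i : ℝ) - (negCount pos lab i : ℝ) + t * n) ≠ 0 := by
    have heq : ((posCount pos lab i : ℝ) - (negCount pos lab i : ℝ) + t * n)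
        = n * ((posCount pos lab i : ℝ) / n - (negCount pos lab i : ℝ) / n + t) := by
      field_simp
    rw [heq]
    exact mul_ne_zero hn0 (by simpa [hP, hQ] using hE)
  field_simp
end

section
/- Fix k ≥ 2 classes with parameters θ_1, …, θ_k in the probability simplex of ℝ^v, m ≥ 1, t > 1, a word index j and a class index i. Let x_1, …, x_n (n ≥ 1) be independent real random variables with fixed label functions y_i, z_i : {1, …, n} → {0, 1} as follows: each document d is either positively labelled into exactly one class l, with Var(x_d) = m·θ_{l j}(1 − θ_{l j}), or negatively labelled as not in exactly one class l, with Var(x_d) = m·(Σ_{b ≠ l} θ_{b j}(1 − θ_{b j}))/(k − 1)². Let C_l, D_l count the documents positively labelled into class l and negatively labelled as not in class l, with Σ_l (C_l + D_l) = n; set p_l = C_l/n, q_l = D_l/n. Define θ̂^{L2} := Σ_{d=1}^n (y_i(d) + t − z_i(d))·x_d / (m·n·(p_i − q_i + t)). Then Var(θ̂^{L2}) = [(1 + 2t)·p_i·θ_{i j}(1 − θ_{i j}) + (1 − 2t)·(q_i/(k − 1)²)·Σ_{l ≠ i} θ_{l j}(1 − θ_{l j}) + t²·Σ_{l=1}^k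 p_l·θ_{l j}(1 − θ_{l j}) + t²·Σ_{l=1}^k (q_l/(k − 1)²)·Σ_{b ≠ l} θ_{b j}(1 − θ_{b j})] / (m·n·(p_i − q_i + t)²). -/
open MeasureTheory ProbabilityTheory Finset

private lemma count_sum {n k : ℕ} (pos : Fin n → Bool) (lab : Fin n → Fin k)
    (g : Bool → Fin k → ℝ) :
    ∑ d : Fin n, g (pos d) (lab d)
      = ∑ l : Fin k, ((posCount pos lab l : ℝ) * g true l
          + (negCount pos lab l : ℝ) * g false l) := by
  classical
  rw [← Finset.sum_fiberwise Finset.univ (fun d => lab d) (fun d => g (pos d) (lab d))]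
  refine Finset.sum_congr rfl fun l _ => ?_
  have hsplit : (Finset.univ.filter fun d => lab d = l)
      = (Finset.univ.filter fun d => pos d = true ∧ lab d = l)
        ∪ (Finset.univ.filter fun d => pos d = false ∧ lab d = l) := by
    ext d; simp only [Finset.mem_filter, Finset.mem_union, Finset.mem_univ, true_and]
    cases h : pos d <;> simp [h]
  rw [hsplit, Finset.sum_union]
  · unfold posCount negCount
    congr 1
    · rw [Finset.sum_congr rfl (fun d hd => ?_), Finset.sum_const, nsmul_eq_mul]
      simp only [Finset.mem_filter] at hd
      rw [hd.2.1, hd.2.2]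
    · rw [Finset.sum_congr rfl (fun d hd => ?_), Finset.sum_const, nsmul_eq_mul]
      simp only [Finset.mem_filter] at hd
      rw [hd.2.1, hd.2.2]
  · rw [Finset.disjoint_left]
    intro d hd hd'
    simp only [Finset.mem_filter] at hd hd'
    rw [hd.2.1] at hd'; exact absurd hd'.2.1 (by simp)

/-- Exact variance of the L2 (likelihood-ratio) estimator (Theorem 3, part 2).
Each document `d` is either positively labelled into exactly one class `lab d`
(when `pos d = true`, with `Var(x d) = m θ_{lab d, j} (1 - θ_{lab d, j})`) or
negatively labelled as not in class `lab d` (when `pos d = false`, with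
`Var(x d) = m ∑_{b ≠ lab d} θ_{b j} (1 - θ_{b j}) / (k-1)²`). With `y_i, z_i`
the class-`i` label indicators, `C_l, D_l` the label counts, `p_l = C_l / n`,
`q_l = D_l / n`, the estimator
`θ̂ = ∑ d, (y_i(d) + t - z_i(d)) x d / (m n (p_i - q_i + t))` has variance
`((1+2t) p_i θ_{i j}(1-θ_{i j}) + (1-2t) (q_i/(k-1)²) ∑_{l≠i} θ_{l j}(1-θ_{l j})
  + t² ∑ l, p_l θ_{l j}(1-θ_{l j})
  + t² ∑ l, (q_l/(k-1)²) ∑_{b≠l} θ_{b j}(1-θ_{b j})) / (m n (p_i - q_i + t)²)`. -/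
theorem L2_estimator_variance {Ω : Type*} [MeasurableSpace Ω]
    (μ : Measure Ω) [IsProbabilityMeasure μ]
    {k v : ℕ} (hk : 2 ≤ k)
    (θ : Fin k → Fin v → ℝ)
    (hθ0 : ∀ l j', 0 ≤ θ l j') (hθ1 : ∀ l, ∑ j', θ l j' = 1)
    (m : ℕ) (hm : 1 ≤ m) (t : ℝ) (ht : 1 < t) (j : Fin v) (i : Fin k)
    (n : ℕ) (hn : 1 ≤ n) (x : Fin n → Ω → ℝ)
    (pos : Fin n → Bool) (lab : Fin n → Fin k)
    (hindep : iIndepFun x μ)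
    (hmem : ∀ d, MemLp (x d) 2 μ)
    (hvar_pos : ∀ d, pos d = true →
      variance (x d) μ = (m : ℝ) * θ (lab d) j * (1 - θ (lab d) j))
    (hvar_neg : ∀ d, pos d = false →
      variance (x d) μ
        = (m : ℝ) * (∑ b ∈ Finset.univ.erase (lab d), θ b j * (1 - θ b j))
            / ((k : ℝ) - 1) ^ 2) :
    variance (fun ω =>
        (∑ d, ((if pos d = true ∧ lab d = i then (1 : ℝ) else 0) + t
            - (if pos d = false ∧ lab d = i then (1 : ℝ) else 0)) * x d ω)
          / ((m : ℝ) * n * ((posCount pos lab i : ℝ) / n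
              - (negCount pos lab i : ℝ) / n + t))) μ
      = ((1 + 2 * t) * ((posCount pos lab i : ℝ) / n) * θ i j * (1 - θ i j)
          + (1 - 2 * t) * (((negCount pos lab i : ℝ) / n) / ((k : ℝ) - 1) ^ 2)
              * ∑ l ∈ Finset.univ.erase i, θ l j * (1 - θ l j)
          + t ^ 2 * ∑ l, ((posCount pos lab l : ℝ) / n) * θ l j * (1 - θ l j)
          + t ^ 2 * ∑ l, (((negCount pos lab l : ℝ) / n) / ((k : ℝ) - 1) ^ 2)
              * ∑ b ∈ Finset.univ.erase l, θ b j * (1 - θ b j))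
        / ((m : ℝ) * n * ((posCount pos lab i : ℝ) / n
            - (negCount pos lab i : ℝ) / n + t) ^ 2) := by
  classical
  set c : Fin n → ℝ := fun d =>
    (if pos d = true ∧ lab d = i then (1 : ℝ) else 0) + t
      - (if pos d = false ∧ lab d = i then (1 : ℝ) else 0) with hc
  set D : ℝ := (posCount pos lab i : ℝ) / n - (negCount pos lab i : ℝ) / n + t with hD
  have hm0 : (m : ℝ) ≠ 0 := Nat.cast_ne_zero.mpr (by omega)
  have hn0 : (n : ℝ) ≠ 0 := Nat.cast_ne_zero.mpr (by omega)
  have hnpos : (0 : ℝ) < n := by positivity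
  have hk0 : (k : ℝ) - 1 ≠ 0 := by
    have : (2 : ℝ) ≤ (k : ℝ) := by exact_mod_cast hk
    linarith
  have hDpos : 0 < D := by
    have h1 : (negCount pos lab i : ℝ) ≤ n := by
      have h := Finset.card_filter_le (Finset.univ : Finset (Fin n))
        (fun d => pos d = false ∧ lab d = i)
      have h2 : (Finset.univ : Finset (Fin n)).card = n := by
        simp [Finset.card_univ]
      rw [h2] at h
      exact_mod_cast h
    have hq : (negCount pos lab i : ℝ) / n ≤ 1 := (div_le_one hnpos).mpr h1
    have hp : (0 : ℝ) ≤ (posCount pos lab i : ℝ) / n := by positivity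
    simp only [hD]
    linarith
  have hD0 : D ≠ 0 := ne_of_gt hDpos
  -- step 1: pull out the constant
  have hrw : (fun ω => (∑ d, c d * x d ω) / ((m : ℝ) * n * D))
      = fun ω => ((m : ℝ) * n * D)⁻¹ * ∑ d, c d * x d ω := by
    funext ω; rw [div_eq_inv_mul]
  rw [hrw, variance_const_mul]
  -- step 2: variance of an independent sum
  have hsum : variance (fun ω => ∑ d, c d * x d ω) μ
      = ∑ d, (c d) ^ 2 * variance (x d) μ := by
    have heq : (fun ω => ∑ d, c d * x d ω) = ∑ d, (fun ω => c d * x d ω) := by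
      funext ω; simp
    rw [heq, IndepFun.variance_sum
      (fun d _ => (hmem d).const_mul (c d))
      (fun a _ b hb hab => (hindep.indepFun hab).comp
        (measurable_const_mul (c a)) (measurable_const_mul (c b)))]
    exact Finset.sum_congr rfl fun d _ => variance_const_mul (c d) (x d) μ
  rw [hsum]
  -- step 3: per-document variance as a function of the label
  set g : Bool → Fin k → ℝ := fun b l =>
      ((if b = true ∧ l = i then (1 : ℝ) else 0) + t
        - (if b = false ∧ l = i then (1 : ℝ) else 0)) ^ 2
      * (if b = true then (m : ℝ) * (θ l j * (1 - θ l j))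
         else (m : ℝ) * (∑ b' ∈ Finset.univ.erase l, θ b' j * (1 - θ b' j))
            / ((k : ℝ) - 1) ^ 2) with hg
  have hterm : ∀ d, (c d) ^ 2 * variance (x d) μ = g (pos d) (lab d) := by
    intro d
    cases hpd : pos d with
    | true =>
        rw [hvar_pos d hpd]
        simp only [hg, hc, hpd, Bool.false_eq_true, Bool.true_eq_false, false_and, true_and,
          eq_self_iff_true, if_false, if_true, and_true, and_false]
        try split_ifs <;> ring
    | false =>
        rw [hvar_neg d hpd]
        simp only [hg, hc, hpd, Bool.false_eq_true, Bool.true_eq_false, false_and, true_and,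
          eq_self_iff_true, if_false, if_true, and_true, and_false]
        try split_ifs <;> ring
  rw [Finset.sum_congr rfl fun d _ => hterm d, count_sum pos lab g]
  -- step 4: evaluate the count sum
  have hstep : ∑ l : Fin k, ((posCount pos lab l : ℝ) * g true l
        + (negCount pos lab l : ℝ) * g false l)
      = t ^ 2 * (∑ l, (posCount pos lab l : ℝ) * ((m : ℝ) * (θ l j * (1 - θ l j))))
        + t ^ 2 * (∑ l, (negCount pos lab l : ℝ)
            * ((m : ℝ) * (∑ b ∈ Finset.univ.erase l, θ b j * (1 - θ b j))
                / ((k : ℝ) - 1) ^ 2))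
        + ((1 + 2 * t) * ((posCount pos lab i : ℝ) * ((m : ℝ) * (θ i j * (1 - θ i j))))
            + (1 - 2 * t) * ((negCount pos lab i : ℝ)
                * ((m : ℝ) * (∑ b ∈ Finset.univ.erase i, θ b j * (1 - θ b j))
                    / ((k : ℝ) - 1) ^ 2))) := by
    have key : ∀ l : Fin k, (posCount pos lab l : ℝ) * g true l
          + (negCount pos lab l : ℝ) * g false l
        = t ^ 2 * ((posCount pos lab l : ℝ) * ((m : ℝ) * (θ l j * (1 - θ l j))))
          + t ^ 2 * ((negCount pos lab l : ℝ)
              * ((m : ℝ) * (∑ b ∈ Finset.univ.erase l, θ b j * (1 - θ b j))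
                  / ((k : ℝ) - 1) ^ 2))
          + (if l = i then
              (1 + 2 * t) * ((posCount pos lab l : ℝ) * ((m : ℝ) * (θ l j * (1 - θ l j))))
                + (1 - 2 * t) * ((negCount pos lab l : ℝ)
                    * ((m : ℝ) * (∑ b ∈ Finset.univ.erase l, θ b j * (1 - θ b j))
                        / ((k : ℝ) - 1) ^ 2))
              else 0) := by
      intro l
      simp only [hg, Bool.false_eq_true, Bool.true_eq_false, false_and, true_and,
        eq_self_iff_true, if_false, if_true, and_true, and_false]
      split_ifs <;> ring
    rw [Finset.sum_congr rfl fun l _ => key l]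
    rw [Finset.sum_add_distrib, Finset.sum_add_distrib, ← Finset.mul_sum, ← Finset.mul_sum,
      Finset.sum_ite_eq' Finset.univ i]
    simp only [Finset.mem_univ, if_true]
  rw [hstep]
  -- step 5: rewrite everything in terms of two common sums and finish
  have hL1 : ∑ l, (posCount pos lab l : ℝ) * ((m : ℝ) * (θ l j * (1 - θ l j)))
      = (m : ℝ) * ∑ l, (posCount pos lab l : ℝ) * (θ l j * (1 - θ l j)) := by
    rw [Finset.mul_sum]; exact Finset.sum_congr rfl fun l _ => by ring
  have hL2 : ∑ l, (negCount pos lab l : ℝ)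
        * ((m : ℝ) * (∑ b ∈ Finset.univ.erase l, θ b j * (1 - θ b j)) / ((k : ℝ) - 1) ^ 2)
      = (m : ℝ) / ((k : ℝ) - 1) ^ 2
        * ∑ l, (negCount pos lab l : ℝ) * ∑ b ∈ Finset.univ.erase l, θ b j * (1 - θ b j) := by
    rw [Finset.mul_sum]; exact Finset.sum_congr rfl fun l _ => by ring
  have hR1 : ∑ l, ((posCount pos lab l : ℝ) / n) * θ l j * (1 - θ l j)
      = (∑ l, (posCount pos lab l : ℝ) * (θ l j * (1 - θ l j))) / n := by
    rw [Finset.sum_div]; exact Finset.sum_congr rfl fun l _ => by ring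
  have hR2 : ∑ l, (((negCount pos lab l : ℝ) / n) / ((k : ℝ) - 1) ^ 2)
        * ∑ b ∈ Finset.univ.erase l, θ b j * (1 - θ b j)
      = (∑ l, (negCount pos lab l : ℝ) * ∑ b ∈ Finset.univ.erase l, θ b j * (1 - θ b j))
          / (n * ((k : ℝ) - 1) ^ 2) := by
    rw [Finset.sum_div]
    refine Finset.sum_congr rfl fun l _ => ?_
    field_simp
    try ring
  rw [hL1, hL2, hR1, hR2]
  set T1 := ∑ l, (posCount pos lab l : ℝ) * (θ l j * (1 - θ l j)) with hT1
  set T2 := ∑ l, (negCount pos lab l : ℝ)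
      * ∑ b ∈ Finset.univ.erase l, θ b j * (1 - θ b j) with hT2
  field_simp
  ring
end

section
/- Under the hypotheses of the exact variance formula for θ̂^{L2} (independent word counts x_1, …, x_n with fixed labels; Var(x_d) = m·θ_{l j}(1 − θ_{l j}) if d is positively labelled into class l and Var(x_d) = m·(Σ_{b ≠ l} θ_{b j}(1 − θ_{b j}))/(k − 1)² if d is negatively labelled as not in class l; θ̂^{L2} := Σ_d (y_i(d) + t − z_i(d))·x_d / (m·n·(p_i − q_i + t)); k ≥ 2; each θ_l in the probability simplex; t > 1), one has Var(θ̂^{L2}) ≤ ((1 + t)² + t²/(k − 1)) / (4·(t − 1)²·m·n). -/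
open MeasureTheory ProbabilityTheory Finset

set_option maxHeartbeats 1600000 in
/-- Order bound on the variance of the L2 estimator (Theorem 3, part 2): under
the hypotheses of the exact variance formula (independent word counts with the
per-document multinomial variances and fixed labels), the variance of
`θ̂ = ∑ d, (y_i(d) + t - z_i(d)) x d / (m n (p_i - q_i + t))` is at most
`((1 + t)² + t²/(k - 1)) / (4 (t - 1)² m n)`, i.e. of order
`O(1 / (m (|S₁| + |S₂|)))`. -/
theorem L2_estimator_variance_order {Ω : Type*} [MeasurableSpace Ω]
    (μ : Measure Ω) [IsProbabilityMeasure μ]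
    {k v : ℕ} (hk : 2 ≤ k)
    (θ : Fin k → Fin v → ℝ)
    (hθ0 : ∀ l j', 0 ≤ θ l j') (hθ1 : ∀ l, ∑ j', θ l j' = 1)
    (m : ℕ) (hm : 1 ≤ m) (t : ℝ) (ht : 1 < t) (j : Fin v) (i : Fin k)
    (n : ℕ) (hn : 1 ≤ n) (x : Fin n → Ω → ℝ)
    (pos : Fin n → Bool) (lab : Fin n → Fin k)
    (hindep : iIndepFun x μ)
    (hmem : ∀ d, MemLp (x d) 2 μ)
    (hvar_pos : ∀ d, pos d = true →
      variance (x d) μ = (m : ℝ) * θ (lab d) j * (1 - θ (lab d) j))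
    (hvar_neg : ∀ d, pos d = false →
      variance (x d) μ
        = (m : ℝ) * (∑ b ∈ Finset.univ.erase (lab d), θ b j * (1 - θ b j))
            / ((k : ℝ) - 1) ^ 2) :
    variance (fun ω =>
        (∑ d, ((if pos d = true ∧ lab d = i then (1 : ℝ) else 0) + t
            - (if pos d = false ∧ lab d = i then (1 : ℝ) else 0)) * x d ω)
          / ((m : ℝ) * n * ((posCount pos lab i : ℝ) / n
              - (negCount pos lab i : ℝ) / n + t))) μ
      ≤ ((1 + t) ^ 2 + t ^ 2 / ((k : ℝ) - 1))
          / (4 * (t - 1) ^ 2 * (m : ℝ) * n) := by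
  classical
  have hn0 : (0:ℝ) < n := by exact_mod_cast hn
  have hm0 : (0:ℝ) < m := by exact_mod_cast hm
  have hk1 : (1:ℝ) ≤ (k:ℝ) - 1 := by
    have : (2:ℝ) ≤ k := by exact_mod_cast hk
    linarith
  have hk0 : (0:ℝ) < (k:ℝ) - 1 := by linarith
  set c : Fin n → ℝ := fun d =>
    (if pos d = true ∧ lab d = i then (1 : ℝ) else 0) + t
      - (if pos d = false ∧ lab d = i then (1 : ℝ) else 0) with hc
  set p : ℝ := (posCount pos lab i : ℝ) / n with hp
  set q : ℝ := (negCount pos lab i : ℝ) / n with hq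
  set D : ℝ := (m : ℝ) * n * (p - q + t) with hD
  have hq1 : q ≤ 1 := by
    rw [hq, div_le_one hn0]
    have := Finset.card_filter_le (Finset.univ : Finset (Fin n))
      (fun d => pos d = false ∧ lab d = i)
    exact_mod_cast (by simpa [negCount] using this)
  have hp0 : 0 ≤ p := by positivity
  have hDge : (m:ℝ) * n * (t - 1) ≤ D := by
    have : t - 1 ≤ p - q + t := by linarith
    have hmn : 0 < (m:ℝ) * n := by positivity
    exact mul_le_mul_of_nonneg_left this hmn.le
  have hDpos : 0 < D :=
    lt_of_lt_of_le (mul_pos (mul_pos hm0 hn0) (by linarith)) hDge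
  -- θ ≤ 1
  have hθle : ∀ l, θ l j ≤ 1 := fun l => by
    have := Finset.single_le_sum (fun j' _ => hθ0 l j') (Finset.mem_univ j)
    rw [hθ1 l] at this; exact this
  -- rewrite variance
  have hmem' : ∀ d, MemLp (fun ω => c d * x d ω) 2 μ := fun d => (hmem d).const_mul _
  have hpair : Set.Pairwise ↑(Finset.univ : Finset (Fin n))
      fun a b => IndepFun (fun ω => c a * x a ω) (fun ω => c b * x b ω) μ := by
    intro a _ b _ hab
    exact (hindep.indepFun hab).comp (measurable_const_mul _) (measurable_const_mul _)
  have hsum : variance (fun ω => ∑ d, c d * x d ω) μ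
      = ∑ d, variance (fun ω => c d * x d ω) μ := by
    have := IndepFun.variance_sum (μ := μ) (X := fun d => fun ω => c d * x d ω)
      (s := Finset.univ) (fun d _ => hmem' d) hpair
    rw [← this]
    congr 1
    ext ω
    simp
  have hvc : ∀ d, variance (fun ω => c d * x d ω) μ = (c d)^2 * variance (x d) μ := by
    intro d
    have : (fun ω => c d * x d ω) = c d • x d := by ext ω; simp [smul_eq_mul]
    rw [this, variance_smul]
  -- main per-term bound
  set M : ℝ := (1 + t) ^ 2 + t ^ 2 / ((k : ℝ) - 1) with hM
  have hterm : ∀ d, (c d)^2 * variance (x d) μ ≤ (m:ℝ) * M / 4 := by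
    intro d
    cases hpd : pos d with
    | true =>
      have hv := hvar_pos d hpd
      have hθ := hθ0 (lab d) j
      have hθ' := hθle (lab d)
      have h14 : θ (lab d) j * (1 - θ (lab d) j) ≤ 1/4 := by
        nlinarith [sq_nonneg (1 - 2 * θ (lab d) j)]
      have hvb : variance (x d) μ ≤ (m:ℝ) / 4 := by
        rw [hv, mul_assoc]
        calc (m:ℝ) * (θ (lab d) j * (1 - θ (lab d) j)) ≤ (m:ℝ) * (1/4) :=
              mul_le_mul_of_nonneg_left h14 hm0.le
          _ = (m:ℝ) / 4 := by ring
      have hvnn : 0 ≤ variance (x d) μ := variance_nonneg _ _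
      have hcb : (c d)^2 ≤ (1 + t)^2 := by
        have : c d = (if lab d = i then (1:ℝ) else 0) + t := by
          simp [hc, hpd]
        rw [this]
        split <;> nlinarith
      have h1 : (c d)^2 * variance (x d) μ ≤ (1+t)^2 * ((m:ℝ)/4) :=
        mul_le_mul hcb hvb hvnn (by positivity)
      have ht2 : 0 ≤ t^2 / ((k:ℝ) - 1) := by positivity
      rw [hM]; nlinarith
    | false =>
      have hv := hvar_neg d hpd
      have hS : (∑ b ∈ Finset.univ.erase (lab d), θ b j * (1 - θ b j))
          ≤ ((k:ℝ) - 1) / 4 := by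
        have hb : ∀ b ∈ Finset.univ.erase (lab d), θ b j * (1 - θ b j) ≤ 1/4 := by
          intro b _
          nlinarith [sq_nonneg (1 - 2 * θ b j)]
        calc (∑ b ∈ Finset.univ.erase (lab d), θ b j * (1 - θ b j))
            ≤ ∑ b ∈ Finset.univ.erase (lab d), (1:ℝ)/4 := Finset.sum_le_sum hb
          _ = ((k:ℝ) - 1) / 4 := by
              rw [Finset.sum_const]
              have : (Finset.univ.erase (lab d)).card = k - 1 := by
                rw [Finset.card_erase_of_mem (Finset.mem_univ _)]; simp
              rw [this]
              have hk' : 1 ≤ k := le_trans (by norm_num) hk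
              rw [nsmul_eq_mul, Nat.cast_sub hk']
              push_cast
              ring
      have hvb : variance (x d) μ ≤ (m:ℝ) / (4 * ((k:ℝ)-1)) := by
        rw [hv, div_le_div_iff₀ (by positivity) (by positivity)]
        calc ((m:ℝ) * ∑ b ∈ Finset.univ.erase (lab d), θ b j * (1 - θ b j))
              * (4 * ((k:ℝ)-1))
            = ((m:ℝ) * (4 * ((k:ℝ)-1)))
              * (∑ b ∈ Finset.univ.erase (lab d), θ b j * (1 - θ b j)) := by ring
          _ ≤ ((m:ℝ) * (4 * ((k:ℝ)-1))) * (((k:ℝ)-1)/4) :=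
              mul_le_mul_of_nonneg_left hS (by positivity)
          _ = (m:ℝ) * ((k:ℝ)-1)^2 := by ring
      have hvnn : 0 ≤ variance (x d) μ := variance_nonneg _ _
      have hcb : (c d)^2 ≤ t^2 := by
        have : c d = t - (if lab d = i then (1:ℝ) else 0) := by
          simp [hc, hpd]
        rw [this]
        split <;> nlinarith
      have h1 : (c d)^2 * variance (x d) μ ≤ t^2 * ((m:ℝ)/(4*((k:ℝ)-1))) :=
        mul_le_mul hcb hvb hvnn (by positivity)
      have h2 : t^2 * ((m:ℝ)/(4*((k:ℝ)-1))) = (m:ℝ) * (t^2/((k:ℝ)-1)) / 4 := by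
        field_simp
      have h3 : 0 ≤ (1+t)^2 := by positivity
      rw [hM]; nlinarith [h1, h2.le]
  have hsumbound : ∑ d, (c d)^2 * variance (x d) μ ≤ (n:ℝ) * ((m:ℝ) * M / 4) := by
    calc ∑ d, (c d)^2 * variance (x d) μ ≤ ∑ _d : Fin n, (m:ℝ) * M / 4 :=
          Finset.sum_le_sum fun d _ => hterm d
      _ = (n:ℝ) * ((m:ℝ) * M / 4) := by simp [mul_comm]
  -- assemble
  have hrw : (fun ω => (∑ d, c d * x d ω) / D) = D⁻¹ • (fun ω => ∑ d, c d * x d ω) := by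
    ext ω; simp [div_eq_inv_mul, smul_eq_mul]
  have hfinal : variance (fun ω => (∑ d, c d * x d ω) / D) μ
      = D⁻¹ ^ 2 * ∑ d, (c d)^2 * variance (x d) μ := by
    rw [hrw, variance_smul, hsum]
    congr 1
    exact Finset.sum_congr rfl fun d _ => hvc d
  rw [show (fun ω =>
        (∑ d, ((if pos d = true ∧ lab d = i then (1 : ℝ) else 0) + t
            - (if pos d = false ∧ lab d = i then (1 : ℝ) else 0)) * x d ω)
          / ((m : ℝ) * n * ((posCount pos lab i : ℝ) / n
              - (negCount pos lab i : ℝ) / n + t)))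
      = fun ω => (∑ d, c d * x d ω) / D from rfl]
  rw [hfinal]
  have hMnn : 0 ≤ M := by rw [hM]; positivity
  have hvnn : 0 ≤ ∑ d, (c d)^2 * variance (x d) μ :=
    Finset.sum_nonneg fun d _ => mul_nonneg (sq_nonneg _) (variance_nonneg _ _)
  have hDi : D⁻¹ ^ 2 ≤ ((m:ℝ) * n * (t-1))⁻¹ ^ 2 := by
    have h0 : 0 < (m:ℝ) * n * (t-1) := mul_pos (mul_pos hm0 hn0) (by linarith)
    gcongr
  calc D⁻¹ ^ 2 * ∑ d, (c d)^2 * variance (x d) μ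
      ≤ ((m:ℝ) * n * (t-1))⁻¹ ^ 2 * ((n:ℝ) * ((m:ℝ) * M / 4)) := by
        apply mul_le_mul hDi hsumbound hvnn (sq_nonneg _)
    _ = M / (4 * (t - 1) ^ 2 * (m : ℝ) * n) := by
        have h1 : (t:ℝ) - 1 ≠ 0 := by linarith
        field_simp
end

section
/- Fix k ≥ 2 classes with parameters θ_1, …, θ_k in the probability simplex of ℝ^v, m ≥ 1, t > 1, a word index j and a class index i. Let x_1, …, x_n (n ≥ 1) be independent real random variables, where each document d belongs to exactly one class l(d) and E[x_d] = m·θ_{l(d) j}; let C_l be the number of documents of class l, with Σ_l C_l = n, and let y_i(d) = 1 if l(d) = i and 0 otherwise. Define the self-corrected estimator θ̂* := Σ_{d=1}^n (2·y_i(d) + t − 1)·x_d / (m·(2·C_i + (t − 1)·n)). Then E[θ̂*] = (2·C_i·θ_{i j} + (t − 1)·Σ_{l=1}^k C_l·θ_{l j}) / (2·C_i + (t − 1)·n), and consequently the bias is E[θ̂*] − θ_{i j} = (t − 1)·Σ_{l=1}^k C_l·(θ_{l j} − θ_{i j}) / (2·C_i + (t − 1)·n). -/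
open MeasureTheory ProbabilityTheory Finset

/-- Number of documents belonging to class `l`. -/
def classCount {n k : ℕ} (lab : Fin n → Fin k) (l : Fin k) : ℕ :=
  (Finset.univ.filter fun d => lab d = l).card

/-- Expectation and bias of the self-corrected estimator (Corollary 1,
expectation/bias part). Each document `d` belongs to exactly one class `lab d`
with `E[x d] = m θ_{lab d, j}`; `C_l` counts the documents of class `l` and
`y_i(d)` indicates `lab d = i`. The estimator
`θ̂* = ∑ d, (2 y_i(d) + t - 1) x d / (m (2 C_i + (t - 1) n))` satisfies
`E[θ̂*] = (2 C_i θ_{i j} + (t - 1) ∑ l, C_l θ_{l j}) / (2 C_i + (t - 1) n)` and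
`E[θ̂*] - θ_{i j} = (t - 1) ∑ l, C_l (θ_{l j} - θ_{i j}) / (2 C_i + (t - 1) n)`. -/
theorem self_corrected_estimator_expectation {Ω : Type*} [MeasurableSpace Ω]
    (μ : Measure Ω) [IsProbabilityMeasure μ]
    {k v : ℕ} (hk : 2 ≤ k)
    (θ : Fin k → Fin v → ℝ)
    (hθ0 : ∀ l j', 0 ≤ θ l j') (hθ1 : ∀ l, ∑ j', θ l j' = 1)
    (m : ℕ) (hm : 1 ≤ m) (t : ℝ) (ht : 1 < t) (j : Fin v) (i : Fin k)
    (n : ℕ) (hn : 1 ≤ n) (x : Fin n → Ω → ℝ) (lab : Fin n → Fin k)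
    (hindep : iIndepFun x μ)
    (hint : ∀ d, Integrable (x d) μ)
    (hmean : ∀ d, ∫ ω, x d ω ∂μ = (m : ℝ) * θ (lab d) j) :
    (∫ ω, (∑ d, (2 * (if lab d = i then (1 : ℝ) else 0) + t - 1) * x d ω)
        / ((m : ℝ) * (2 * (classCount lab i : ℝ) + (t - 1) * n)) ∂μ)
      = (2 * (classCount lab i : ℝ) * θ i j
          + (t - 1) * ∑ l, (classCount lab l : ℝ) * θ l j)
        / (2 * (classCount lab i : ℝ) + (t - 1) * n) ∧
    (∫ ω, (∑ d, (2 * (if lab d = i then (1 : ℝ) else 0) + t - 1) * x d ω)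
        / ((m : ℝ) * (2 * (classCount lab i : ℝ) + (t - 1) * n)) ∂μ) - θ i j
      = (t - 1) * (∑ l, (classCount lab l : ℝ) * (θ l j - θ i j))
        / (2 * (classCount lab i : ℝ) + (t - 1) * n) := by
  set Ci : ℝ := (classCount lab i : ℝ) with hCi
  have hCinn : (0:ℝ) ≤ Ci := by positivity
  have hA : (0:ℝ) < 2 * Ci + (t - 1) * n := by
    have h1 : (0:ℝ) < (t - 1) * n := by
      apply mul_pos (by linarith)
      exact_mod_cast Nat.lt_of_lt_of_le Nat.zero_lt_one hn
    linarith
  have hm' : (0:ℝ) < (m : ℝ) := by exact_mod_cast hm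
  have hD : ((m : ℝ) * (2 * Ci + (t - 1) * n)) ≠ 0 := by positivity
  -- compute the integral
  have hI : (∫ ω, (∑ d, (2 * (if lab d = i then (1 : ℝ) else 0) + t - 1) * x d ω)
        / ((m : ℝ) * (2 * Ci + (t - 1) * n)) ∂μ)
      = (∑ d, (2 * (if lab d = i then (1 : ℝ) else 0) + t - 1) * ((m : ℝ) * θ (lab d) j))
        / ((m : ℝ) * (2 * Ci + (t - 1) * n)) := by
    rw [integral_div, integral_finset_sum]
    · congr 1
      exact Finset.sum_congr rfl fun d _ => by rw [MeasureTheory.integral_const_mul, hmean d]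
    · exact fun d _ => (hint d).const_mul _
  -- fiberwise counting lemmas
  have hsum_theta : (∑ d : Fin n, θ (lab d) j) = ∑ l, (classCount lab l : ℝ) * θ l j := by
    rw [← Finset.sum_fiberwise_of_maps_to (g := lab) (fun d _ => Finset.mem_univ (lab d))]
    refine Finset.sum_congr rfl fun l _ => ?_
    rw [Finset.sum_congr rfl (fun d hd => by
      rw [(Finset.mem_filter.1 hd).2])]
    simp [classCount, mul_comm]
  have hsum_ind : (∑ d : Fin n, (if lab d = i then (1:ℝ) else 0) * θ (lab d) j)
      = Ci * θ i j := by
    have h1 : (∑ d : Fin n, (if lab d = i then (1:ℝ) else 0) * θ (lab d) j)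
        = ∑ d ∈ Finset.univ.filter (fun d => lab d = i), θ i j := by
      rw [Finset.sum_filter]
      exact Finset.sum_congr rfl fun d _ => by by_cases h : lab d = i <;> simp [h]
    rw [h1, Finset.sum_const, nsmul_eq_mul]
    simp [hCi, classCount]
  have hsum_C : (∑ l, (classCount lab l : ℝ)) = n := by
    have := Finset.card_eq_sum_card_fiberwise (s := (Finset.univ : Finset (Fin n)))
      (t := (Finset.univ : Finset (Fin k))) (f := lab) (fun d _ => Finset.mem_univ _)
    simp only [Finset.card_univ, Fintype.card_fin] at this
    simp only [classCount]
    exact_mod_cast this.symm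
  -- numerator simplification
  have hnum : (∑ d, (2 * (if lab d = i then (1 : ℝ) else 0) + t - 1) * ((m : ℝ) * θ (lab d) j))
      = (m : ℝ) * (2 * Ci * θ i j + (t - 1) * ∑ l, (classCount lab l : ℝ) * θ l j) := by
    have : ∀ d, (2 * (if lab d = i then (1 : ℝ) else 0) + t - 1) * ((m : ℝ) * θ (lab d) j)
        = (m:ℝ) * (2 * ((if lab d = i then (1:ℝ) else 0) * θ (lab d) j)
            + (t - 1) * θ (lab d) j) := fun d => by ring
    rw [Finset.sum_congr rfl fun d _ => this d, ← Finset.mul_sum, Finset.sum_add_distrib,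
      ← Finset.mul_sum, ← Finset.mul_sum, hsum_ind, hsum_theta]
    ring
  have key : (∫ ω, (∑ d, (2 * (if lab d = i then (1 : ℝ) else 0) + t - 1) * x d ω)
        / ((m : ℝ) * (2 * Ci + (t - 1) * n)) ∂μ)
      = (2 * Ci * θ i j + (t - 1) * ∑ l, (classCount lab l : ℝ) * θ l j)
        / (2 * Ci + (t - 1) * n) := by
    rw [hI, hnum, mul_div_mul_left _ _ (ne_of_gt hm')]
  refine ⟨key, ?_⟩
  rw [key]
  rw [eq_div_iff (ne_of_gt hA), sub_mul, div_mul_cancel₀ _ (ne_of_gt hA)]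
  have expand : (∑ l, (classCount lab l : ℝ) * (θ l j - θ i j))
      = (∑ l, (classCount lab l : ℝ) * θ l j) - (n : ℝ) * θ i j := by
    rw [Finset.sum_congr rfl (fun l _ => by ring : ∀ l ∈ Finset.univ,
      (classCount lab l : ℝ) * (θ l j - θ i j)
        = (classCount lab l : ℝ) * θ l j - (classCount lab l : ℝ) * θ i j),
      Finset.sum_sub_distrib, ← Finset.sum_mul, hsum_C]
  rw [expand]
  ring
end

section
/- Fix k ≥ 2 classes with parameters θ_1, …, θ_k in the probability simplex of ℝ^v, m ≥ 1, t > 1, a word index j and a class index i. Let x_1, …, x_n (n ≥ 1) be independent real random variables, where each document d belongs to exactly one class l(d) and Var(x_d) = m·θ_{l(d) j}·(1 − θ_{l(d) j}); let C_l be the number of documents of class l, with Σ_l C_l = n, and y_i(d) = 1 if l(d) = i and 0 otherwise. Define θ̂* := Σ_{d=1}^n (2·y_i(d) + t − 1)·x_d / (m·(2·C_i + (t − 1)·n)). Then Var(θ̂*) = [(t + 1)²·C_i·θ_{i j}(1 − θ_{i j}) + (t − 1)²·Σ_{l ≠ i} C_l·θ_{l j}(1 − θ_{l j})] / (m·(2·C_i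 + (t − 1)·n)²), and in particular Var(θ̂*) ≤ (t + 1)² / (4·(t − 1)²·m·n). -/
open MeasureTheory ProbabilityTheory Finset

set_option maxHeartbeats 1000000 in
/-- Variance of the self-corrected estimator (Corollary 1, variance part).
Each document `d` belongs to exactly one class `lab d` with
`Var(x d) = m θ_{lab d, j} (1 - θ_{lab d, j})`; `C_l` counts the documents of
class `l` and `y_i(d)` indicates `lab d = i`. The estimator
`θ̂* = ∑ d, (2 y_i(d) + t - 1) x d / (m (2 C_i + (t - 1) n))` satisfies
`Var(θ̂*) = ((t+1)² C_i θ_{i j}(1-θ_{i j}) + (t-1)² ∑_{l≠i} C_l θ_{l j}(1-θ_{l j}))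
  / (m (2 C_i + (t-1) n)²)` and in particular
`Var(θ̂*) ≤ (t+1)² / (4 (t-1)² m n)`. -/
theorem self_corrected_estimator_variance {Ω : Type*} [MeasurableSpace Ω]
    (μ : Measure Ω) [IsProbabilityMeasure μ]
    {k v : ℕ} (hk : 2 ≤ k)
    (θ : Fin k → Fin v → ℝ)
    (hθ0 : ∀ l j', 0 ≤ θ l j') (hθ1 : ∀ l, ∑ j', θ l j' = 1)
    (m : ℕ) (hm : 1 ≤ m) (t : ℝ) (ht : 1 < t) (j : Fin v) (i : Fin k)
    (n : ℕ) (hn : 1 ≤ n) (x : Fin n → Ω → ℝ) (lab : Fin n → Fin k)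
    (hindep : iIndepFun x μ)
    (hmem : ∀ d, MemLp (x d) 2 μ)
    (hvar : ∀ d, variance (x d) μ = (m : ℝ) * θ (lab d) j * (1 - θ (lab d) j)) :
    variance (fun ω =>
        (∑ d, (2 * (if lab d = i then (1 : ℝ) else 0) + t - 1) * x d ω)
          / ((m : ℝ) * (2 * (classCount lab i : ℝ) + (t - 1) * n))) μ
      = ((t + 1) ^ 2 * (classCount lab i : ℝ) * θ i j * (1 - θ i j)
          + (t - 1) ^ 2 * ∑ l ∈ Finset.univ.erase i,
              (classCount lab l : ℝ) * θ l j * (1 - θ l j))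
        / ((m : ℝ) * (2 * (classCount lab i : ℝ) + (t - 1) * n) ^ 2) ∧
    variance (fun ω =>
        (∑ d, (2 * (if lab d = i then (1 : ℝ) else 0) + t - 1) * x d ω)
          / ((m : ℝ) * (2 * (classCount lab i : ℝ) + (t - 1) * n))) μ
      ≤ (t + 1) ^ 2 / (4 * (t - 1) ^ 2 * (m : ℝ) * n) := by
  classical
  set a : Fin n → ℝ := fun d => 2 * (if lab d = i then (1 : ℝ) else 0) + t - 1 with ha
  set D : ℝ := (m : ℝ) * (2 * (classCount lab i : ℝ) + (t - 1) * n) with hD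
  have hm0 : (0 : ℝ) < m := by exact_mod_cast hm
  have hn0 : (0 : ℝ) < n := by exact_mod_cast hn
  have ht1 : (0 : ℝ) < t - 1 := by linarith
  have hC0 : (0 : ℝ) ≤ (classCount lab i : ℝ) := Nat.cast_nonneg _
  have hDen : (0 : ℝ) < 2 * (classCount lab i : ℝ) + (t - 1) * n := by nlinarith
  have hD0 : 0 < D := mul_pos hm0 hDen
  -- variance of the scaled sum
  have hsum : variance (fun ω => ∑ d, a d * x d ω) μ
      = ∑ d, (a d) ^ 2 * ((m : ℝ) * θ (lab d) j * (1 - θ (lab d) j)) := by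
    have h1 : (fun ω => ∑ d, a d * x d ω) = ∑ d, (fun ω => a d * x d ω) := by
      funext ω; simp
    rw [h1, IndepFun.variance_sum]
    · exact Finset.sum_congr rfl fun d _ => by rw [variance_const_mul, hvar d]
    · exact fun d _ => (hmem d).const_mul _
    · intro d _ e he hde
      exact (hindep.indepFun hde).comp (measurable_const_mul (a d))
        (measurable_const_mul (a e))
  have hvartot : variance (fun ω => (∑ d, a d * x d ω) / D) μ
      = D⁻¹ ^ 2 * ∑ d, (a d) ^ 2 * ((m : ℝ) * θ (lab d) j * (1 - θ (lab d) j)) := by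
    have h2 : (fun ω => (∑ d, a d * x d ω) / D)
        = fun ω => D⁻¹ * (fun ω => ∑ d, a d * x d ω) ω := by
      funext ω; rw [div_eq_inv_mul]
    rw [h2, variance_const_mul, hsum]
  -- fiberwise computation of the sum
  have hfiber : ∑ d, (a d) ^ 2 * ((m : ℝ) * θ (lab d) j * (1 - θ (lab d) j))
      = (m : ℝ) * ((t + 1) ^ 2 * (classCount lab i : ℝ) * θ i j * (1 - θ i j)
          + (t - 1) ^ 2 * ∑ l ∈ Finset.univ.erase i,
              (classCount lab l : ℝ) * θ l j * (1 - θ l j)) := by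
    have h3 : ∑ d, (a d) ^ 2 * ((m : ℝ) * θ (lab d) j * (1 - θ (lab d) j))
        = ∑ l : Fin k, ∑ d ∈ Finset.univ.filter fun d => lab d = l,
            (a d) ^ 2 * ((m : ℝ) * θ (lab d) j * (1 - θ (lab d) j)) :=
      (Finset.sum_fiberwise_of_maps_to (fun d _ => Finset.mem_univ (lab d)) _).symm
    have h4 : ∀ l : Fin k, ∑ d ∈ Finset.univ.filter fun d => lab d = l,
        (a d) ^ 2 * ((m : ℝ) * θ (lab d) j * (1 - θ (lab d) j))
        = (classCount lab l : ℝ) *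
            ((if l = i then (t + 1) ^ 2 else (t - 1) ^ 2) * ((m : ℝ) * θ l j * (1 - θ l j))) := by
      intro l
      have hc : ∀ d ∈ Finset.univ.filter fun d => lab d = l,
          (a d) ^ 2 * ((m : ℝ) * θ (lab d) j * (1 - θ (lab d) j))
          = (if l = i then (t + 1) ^ 2 else (t - 1) ^ 2) * ((m : ℝ) * θ l j * (1 - θ l j)) := by
        intro d hd
        have hdl : lab d = l := by simpa using (Finset.mem_filter.mp hd).2
        simp only [ha, hdl]
        by_cases hli : l = i
        · simp only [if_pos hli]; ring
        · simp only [if_neg hli]; ring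
      rw [Finset.sum_congr rfl hc, Finset.sum_const, nsmul_eq_mul]
      rfl
    have h5 : ∑ l ∈ Finset.univ.erase i, (classCount lab l : ℝ) *
          ((if l = i then (t + 1) ^ 2 else (t - 1) ^ 2) * ((m : ℝ) * θ l j * (1 - θ l j)))
        = (m : ℝ) * ((t - 1) ^ 2 * ∑ l ∈ Finset.univ.erase i,
            (classCount lab l : ℝ) * θ l j * (1 - θ l j)) := by
      rw [Finset.mul_sum, Finset.mul_sum]
      refine Finset.sum_congr rfl fun l hl => ?_
      rw [if_neg (Finset.ne_of_mem_erase hl)]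
      ring
    rw [h3, Finset.sum_congr rfl fun l _ => h4 l,
      ← Finset.add_sum_erase _ _ (Finset.mem_univ i), if_pos rfl, h5]
    ring
  have key : variance (fun ω => (∑ d, a d * x d ω) / D) μ
      = ((t + 1) ^ 2 * (classCount lab i : ℝ) * θ i j * (1 - θ i j)
          + (t - 1) ^ 2 * ∑ l ∈ Finset.univ.erase i,
              (classCount lab l : ℝ) * θ l j * (1 - θ l j))
        / ((m : ℝ) * (2 * (classCount lab i : ℝ) + (t - 1) * n) ^ 2) := by
    rw [hvartot, hfiber, hD]
    field_simp
  refine ⟨key, ?_⟩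
  rw [key]
  -- bounds on θ
  have hθle : ∀ l : Fin k, θ l j * (1 - θ l j) ≤ 1 / 4 := by
    intro l
    have h1 : θ l j ≤ 1 := by
      rw [← hθ1 l]
      exact Finset.single_le_sum (fun j' _ => hθ0 l j') (Finset.mem_univ j)
    nlinarith [sq_nonneg (θ l j - 1 / 2)]
  have hcards : (classCount lab i : ℝ) + ∑ l ∈ Finset.univ.erase i, (classCount lab l : ℝ)
      = (n : ℝ) := by
    have := Finset.card_eq_sum_card_fiberwise
      (f := lab) (s := (Finset.univ : Finset (Fin n))) (t := Finset.univ)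
      (fun d _ => Finset.mem_univ (lab d))
    have h5 : ∑ l : Fin k, (classCount lab l : ℝ) = (n : ℝ) := by
      rw [show (n : ℝ) = ((Finset.univ : Finset (Fin n)).card : ℝ) by simp, this]
      push_cast [classCount]
      rfl
    rw [← h5, ← Finset.add_sum_erase _ _ (Finset.mem_univ i)]
  -- numerator bound
  have hnum : (t + 1) ^ 2 * (classCount lab i : ℝ) * θ i j * (1 - θ i j)
      + (t - 1) ^ 2 * ∑ l ∈ Finset.univ.erase i,
          (classCount lab l : ℝ) * θ l j * (1 - θ l j)
      ≤ (t + 1) ^ 2 / 4 * n := by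
    have hb1 : (t + 1) ^ 2 * (classCount lab i : ℝ) * θ i j * (1 - θ i j)
        ≤ (t + 1) ^ 2 / 4 * (classCount lab i : ℝ) := by
      have h := mul_le_mul_of_nonneg_left (hθle i)
        (show (0 : ℝ) ≤ (t + 1) ^ 2 * (classCount lab i : ℝ) by positivity)
      nlinarith [h]
    have hb2 : ∑ l ∈ Finset.univ.erase i, (classCount lab l : ℝ) * θ l j * (1 - θ l j)
        ≤ 1 / 4 * ∑ l ∈ Finset.univ.erase i, (classCount lab l : ℝ) := by
      rw [Finset.mul_sum]
      refine Finset.sum_le_sum fun l _ => ?_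
      have h := mul_le_mul_of_nonneg_left (hθle l)
        (show (0 : ℝ) ≤ (classCount lab l : ℝ) from Nat.cast_nonneg _)
      nlinarith [h]
    have hb3 : (t - 1) ^ 2 ≤ (t + 1) ^ 2 := by nlinarith
    have hS : (0 : ℝ) ≤ ∑ l ∈ Finset.univ.erase i, (classCount lab l : ℝ) :=
      Finset.sum_nonneg fun l _ => Nat.cast_nonneg _
    have h7 := mul_le_mul_of_nonneg_left hb2 (sq_nonneg (t - 1))
    have h8 := mul_le_mul_of_nonneg_right hb3
      (show (0 : ℝ) ≤ 1 / 4 * ∑ l ∈ Finset.univ.erase i, (classCount lab l : ℝ) by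
        positivity)
    rw [← hcards]
    nlinarith [h7, h8, hb1]
  -- denominator bound
  have hden : (t - 1) ^ 2 * (n : ℝ) ^ 2 ≤ (2 * (classCount lab i : ℝ) + (t - 1) * n) ^ 2 := by
    nlinarith [sq_nonneg (classCount lab i : ℝ), mul_nonneg hC0 (le_of_lt (mul_pos ht1 hn0))]
  have h6 : (0 : ℝ) < (m : ℝ) * (2 * (classCount lab i : ℝ) + (t - 1) * n) ^ 2 :=
    mul_pos hm0 (by nlinarith)
  calc ((t + 1) ^ 2 * (classCount lab i : ℝ) * θ i j * (1 - θ i j)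
        + (t - 1) ^ 2 * ∑ l ∈ Finset.univ.erase i,
            (classCount lab l : ℝ) * θ l j * (1 - θ l j))
      / ((m : ℝ) * (2 * (classCount lab i : ℝ) + (t - 1) * n) ^ 2)
      ≤ ((t + 1) ^ 2 / 4 * n) / ((m : ℝ) * ((t - 1) ^ 2 * (n : ℝ) ^ 2)) := by
        apply div_le_div₀ (by positivity) hnum (by positivity)
        exact mul_le_mul_of_nonneg_left hden (le_of_lt hm0)
    _ = (t + 1) ^ 2 / (4 * (t - 1) ^ 2 * (m : ℝ) * n) := by
        field_simp
end
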